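/- arXiv:1609.02510 — 2 statements merged into one kernel-verified Lean document; each statement's English description precedes it below -/
import Mathlib

section
/- The operator τ is an involution: τ(τ(X)) = X for all X ∈ ⋀⁴V. -/
open ExteriorAlgebra

/-- The decomposable element `v 0 ∧ v 1 ∧ … ∧ v (n-1)` of the `n`-th exterior power
`⋀[F]^n V`, viewed as a submodule of the exterior algebra. -/
noncomputable def wedge {F : Type*} [Field F] {V : Type*} [AddCommGroup V] [Module F V]
    (n : ℕ) (v : Fin n → V) : ⋀[F]^n V :=
  ⟨ιMulti F n v, ιMulti_range F n (Set.mem_range_self v)⟩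

namespace Stmt14Aux

def detAux : (n : ℕ) → Matrix (Fin n) (Fin n) ℤ → ℤ
  | 0, _ => 1
  | n+1, M => ∑ j : Fin (n+1), (-1)^(j:ℕ) *
      (if M 0 j = 0 then 0 else M 0 j * detAux n (M.submatrix Fin.succ j.succAbove))

theorem detAux_eq : ∀ (n) (M : Matrix (Fin n) (Fin n) ℤ), detAux n M = M.det
  | 0, M => Matrix.det_fin_zero.symm
  | n+1, M => by
    rw [Matrix.det_succ_row_zero]
    refine Finset.sum_congr rfl fun j _ => ?_
    by_cases h : M 0 j = 0
    · simp [h]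
    · rw [if_neg h, detAux_eq, mul_assoc]

def σ8 : Fin 8 → Fin 8 := fun i => i + 4

def βZ (a b : Fin 8) : ℤ :=
  if (b : ℕ) = (a : ℕ) + 4 then 1 else if (a : ℕ) = (b : ℕ) + 4 then -1 else 0

abbrev Idx := {S : Finset (Fin 8) // S.card = 4}

def lst (S : Finset (Fin 8)) : List (Fin 8) := (List.finRange 8).filter (· ∈ S)

lemma lst_length (S : Finset (Fin 8)) : (lst S).length = S.card := by
  classical
  have h : (Finset.univ.filter (· ∈ S)) = S := Finset.filter_univ_mem S
  calc (lst S).length = (Finset.univ.filter (· ∈ S)).card := rfl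
    _ = S.card := by rw [h]

def m (S : Idx) : Fin 4 → Fin 8 := fun i => (lst S.1).getD i 0

lemma hlen (S : Idx) : (lst S.1).length = 4 := by rw [lst_length, S.2]

lemma m_eq_get (S : Idx) (i : Fin 4) : m S i = (lst S.1).get (Fin.cast (hlen S).symm i) := by
  rw [m, List.getD_eq_getElem _ _ (by rw [hlen S]; exact i.isLt)]
  rfl

lemma lst_nodup (S : Finset (Fin 8)) : (lst S).Nodup :=
  (List.nodup_finRange 8).filter _

lemma m_inj (S : Idx) : Function.Injective (m S) := by
  intro i j h
  rw [m_eq_get, m_eq_get] at h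
  have := (List.Nodup.get_inj_iff (lst_nodup S.1)).mp h
  exact Fin.cast_injective _ this

lemma m_mem (S : Idx) (i : Fin 4) : m S i ∈ S.1 := by
  rw [m_eq_get]
  have h1 : (lst S.1).get (Fin.cast (hlen S).symm i) ∈ lst S.1 := List.get_mem _ _
  have := List.of_mem_filter h1
  simpa using this

lemma m_surj (S : Idx) {x : Fin 8} (hx : x ∈ S.1) : ∃ i, m S i = x := by
  have hxl : x ∈ lst S.1 := List.mem_filter.mpr ⟨List.mem_finRange x, by simpa⟩
  obtain ⟨i, hi⟩ := List.mem_iff_get.mp hxl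
  exact ⟨Fin.cast (hlen S) i, by rw [m_eq_get]; simpa using hi⟩

lemma σ8_inj : Function.Injective σ8 := fun a b h => by
  simpa [σ8] using congrArg (fun x => x - (4 : Fin 8)) h

def Sc (S : Idx) : Idx := ⟨S.1ᶜ, by rw [Finset.card_compl, S.2]; rfl⟩

def fS (S : Idx) : Idx :=
  ⟨(S.1.image σ8)ᶜ, by
    rw [Finset.card_compl, Finset.card_image_of_injective _ σ8_inj, S.2]; rfl⟩

def GZ (k : Fin 8 → Fin 8) : ℤ := detAux 8 (Matrix.of fun i j => if k j = i then 1 else 0)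

def pairG (S T : Idx) : ℤ := GZ (Fin.append (m S) (m T))

def η (S : Idx) : ℤ := pairG S (Sc S)

def GbZ (S T : Idx) : ℤ := detAux 4 (Matrix.of fun i j => βZ (m S i) (m T j))

def cZ (S : Idx) : ℤ := η (fS S) * GbZ S (Sc (fS S))

example : η ⟨{0,1,2,3}, rfl⟩ = 1 := by decide

set_option maxRecDepth 10000 in
set_option maxRecDepth 10000 in
theorem D5 : ∀ S : Idx, fS (fS S) = S := by decide
set_option maxRecDepth 10000 in
set_option maxRecDepth 10000 in
theorem D2 : ∀ S : Idx, η S * η S = 1 := by decide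
set_option maxRecDepth 10000 in
set_option maxRecDepth 10000 in
theorem D6 : ∀ S : Idx, cZ S * cZ (fS S) = 1 := by decide

lemma Sc_inj : Function.Injective Sc := fun S T h => by
  have := congrArg (fun X : Idx => X.1ᶜ) h
  simp only [Sc, compl_compl] at this
  exact Subtype.ext this

lemma Sc_fS_val (S : Idx) : (Sc (fS S)).1 = S.1.image σ8 := compl_compl _

lemma eq_fS_of_Sc_eq {S T : Idx} (h : (Sc T).1 = S.1.image σ8) : T = fS S := by
  apply Subtype.ext
  have : T.1ᶜ = S.1.image σ8 := h
  have h2 : T.1 = (S.1.image σ8)ᶜ := by rw [← this, compl_compl]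
  exact h2

lemma βZ_zero {a b : Fin 8} (h : b ≠ σ8 a) : βZ a b = 0 := by
  have ha := a.isLt
  have hb := b.isLt
  have hs : (σ8 a : ℕ) = ((a : ℕ) + 4) % 8 := by
    simp only [σ8, Fin.val_add]
    rfl
  have h1 : ¬((b : ℕ) = (a : ℕ) + 4) := by
    intro hc
    exact h (Fin.ext (by omega))
  have h2 : ¬((a : ℕ) = (b : ℕ) + 4) := by
    intro hc
    exact h (Fin.ext (by omega))
  simp [βZ, h1, h2]

lemma pairG_vanish {S U : Idx} (h : U ≠ Sc S) : pairG S U = 0 := by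
  have hx : ∃ x, x ∈ U.1 ∧ x ∈ S.1 := by
    by_contra hc
    push_neg at hc
    have hsub : U.1 ⊆ S.1ᶜ := fun x hxU => Finset.mem_compl.mpr (hc x hxU)
    have hcard : (S.1ᶜ).card ≤ U.1.card := by
      rw [Finset.card_compl, S.2, U.2]; rfl
    exact h (Subtype.ext (Finset.eq_of_subset_of_card_le hsub hcard))
  obtain ⟨x, hxU, hxS⟩ := hx
  obtain ⟨j₁, hj₁⟩ := m_surj S hxS
  obtain ⟨j₂, hj₂⟩ := m_surj U hxU
  rw [pairG, GZ, detAux_eq]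
  apply Matrix.det_zero_of_column_eq (i := Fin.castAdd 4 j₁) (j := Fin.natAdd 4 j₂)
  · simp only [ne_eq, Fin.ext_iff, Fin.coe_castAdd, Fin.coe_natAdd]
    omega
  · intro k
    simp only [Matrix.of_apply, Fin.append_left, Fin.append_right, hj₁, hj₂]

lemma GbZ_vanish {S T : Idx} (h : T.1 ≠ S.1.image σ8) : GbZ S T = 0 := by
  have hx : ∃ i : Fin 4, σ8 (m S i) ∉ T.1 := by
    by_contra hc
    push_neg at hc
    have hsub : S.1.image σ8 ⊆ T.1 := by
      intro y hy
      obtain ⟨x, hxS, rfl⟩ := Finset.mem_image.mp hy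
      obtain ⟨i, rfl⟩ := m_surj S hxS
      exact hc i
    have hcard : T.1.card ≤ (S.1.image σ8).card := by
      rw [Finset.card_image_of_injective _ σ8_inj, S.2, T.2]
    exact h (Finset.eq_of_subset_of_card_le hsub hcard).symm
  obtain ⟨i, hi⟩ := hx
  rw [GbZ, detAux_eq]
  apply Matrix.det_eq_zero_of_row_eq_zero i
  intro j
  exact βZ_zero (fun hc => hi (hc ▸ m_mem T j))


lemma βZ_cc (i j : Fin 4) : βZ (Fin.castAdd 4 i) (Fin.castAdd 4 j) = 0 := by
  have hi := i.isLt; have hj := j.isLt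
  simp only [βZ, Fin.coe_castAdd]
  rw [if_neg (by omega), if_neg (by omega)]

lemma βZ_nn (i j : Fin 4) : βZ (Fin.natAdd 4 i) (Fin.natAdd 4 j) = 0 := by
  have hi := i.isLt; have hj := j.isLt
  simp only [βZ, Fin.coe_natAdd]
  rw [if_neg (by omega), if_neg (by omega)]

lemma βZ_cn (i j : Fin 4) : βZ (Fin.castAdd 4 i) (Fin.natAdd 4 j) = if i = j then 1 else 0 := by
  have hi := i.isLt; have hj := j.isLt
  simp only [βZ, Fin.coe_castAdd, Fin.coe_natAdd]
  by_cases h : i = j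
  · subst h
    rw [if_pos (by omega), if_pos rfl]
  · have hne : (i : ℕ) ≠ (j : ℕ) := fun hc => h (Fin.ext hc)
    rw [if_neg (by omega), if_neg (by omega), if_neg h]

lemma βZ_nc (i j : Fin 4) : βZ (Fin.natAdd 4 i) (Fin.castAdd 4 j) = if i = j then -1 else 0 := by
  have hi := i.isLt; have hj := j.isLt
  simp only [βZ, Fin.coe_castAdd, Fin.coe_natAdd]
  by_cases h : i = j
  · subst h
    rw [if_neg (by omega), if_pos (by omega), if_pos rfl]
  · have hne : (i : ℕ) ≠ (j : ℕ) := fun hc => h (Fin.ext hc)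
    rw [if_neg (by omega), if_neg (by omega), if_neg h]

section Main

variable {F V : Type*} [Field F] [AddCommGroup V] [Module F V] (e : Module.Basis (Fin 8) F V)

lemma detAux_map {n : ℕ} (M : Matrix (Fin n) (Fin n) ℤ) :
    (M.map (Int.cast : ℤ → F)).det = ((detAux n M : ℤ) : F) := by
  rw [detAux_eq]
  have h := RingHom.map_det (Int.castRingHom F) M
  rw [RingHom.mapMatrix_apply] at h
  have h2 : (M.map (Int.cast : ℤ → F)) = M.map (Int.castRingHom F) := rfl
  rw [h2, ← h]
  simp

noncomputable def Wg (g : Fin 4 → Fin 8) : ⋀[F]^4 V := wedge 4 fun i => e (g i)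

lemma span_wedge :
    Submodule.span F (Set.range (wedge (F := F) (V := V) 4)) = ⊤ := by
  apply Submodule.map_injective_of_injective (Submodule.injective_subtype (⋀[F]^4 V))
  rw [Submodule.map_span, Submodule.map_subtype_top]
  refine Eq.trans (congrArg (Submodule.span F) ?_) (ιMulti_span_fixedDegree F 4)
  ext x
  constructor
  · rintro ⟨_, ⟨v, rfl⟩, rfl⟩; exact ⟨v, rfl⟩
  · rintro ⟨v, rfl⟩; exact ⟨wedge 4 v, ⟨v, rfl⟩, rfl⟩

lemma wedge_expand (v : Fin 4 → V) :
    wedge 4 v = ∑ g : Fin 4 → Fin 8, (∏ i, e.repr (v i) (g i)) • Wg e g := by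
  apply Subtype.ext
  rw [Submodule.coe_sum]
  simp only [SetLike.val_smul, Wg]
  show ιMulti F 4 v = _
  have hv : v = fun i => ∑ j : Fin 8, e.repr (v i) j • e j :=
    funext fun i => (e.sum_repr (v i)).symm
  conv_lhs => rw [hv]
  have h1 := (ιMulti F 4 (M := V)).toMultilinearMap.map_sum
    (α := fun _ : Fin 4 => Fin 8) (g := fun i j => e.repr (v i) j • e j)
  simp only [AlternatingMap.coe_multilinearMap] at h1
  rw [h1]
  refine Finset.sum_congr rfl fun g _ => ?_
  have h2 := (ιMulti F 4 (M := V)).toMultilinearMap.map_smul_univ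
    (fun i => e.repr (v i) (g i)) (fun i => e (g i))
  simp only [AlternatingMap.coe_multilinearMap] at h2
  rw [h2]
  rfl

lemma span_W : Submodule.span F (Set.range (Wg e)) = ⊤ := by
  rw [eq_top_iff, ← span_wedge (F := F) (V := V)]
  apply Submodule.span_le.mpr
  rintro _ ⟨v, rfl⟩
  rw [wedge_expand e v]
  exact Submodule.sum_mem _ fun g _ =>
    Submodule.smul_mem _ _ (Submodule.subset_span ⟨g, rfl⟩)

lemma Wg_zero {g : Fin 4 → Fin 8} (hg : ¬Function.Injective g) : Wg e g = 0 := by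
  rw [Function.not_injective_iff] at hg
  obtain ⟨a, b, hab, hne⟩ := hg
  apply Subtype.ext
  show ιMulti F 4 _ = 0
  exact AlternatingMap.map_eq_zero_of_eq _ _ (by rw [hab]) hne

lemma Wg_perm (g : Fin 4 → Fin 8) (π : Equiv.Perm (Fin 4)) :
    Wg e (fun i => g (π i)) = ((Equiv.Perm.sign π : ℤ) : F) • Wg e g := by
  apply Subtype.ext
  rw [SetLike.val_smul]
  show ιMulti F 4 ((fun i => e (g i)) ∘ π) = _
  rw [AlternatingMap.map_perm, Units.smul_def, Int.cast_smul_eq_zsmul]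
  rfl

lemma Wg_scale {g : Fin 4 → Fin 8} (hg : Function.Injective g) :
    ∃ (S : Idx) (c : F), Wg e g = c • Wg e (m S) := by
  have hcard0 : (Finset.image g Finset.univ).card = 4 := by
    rw [Finset.card_image_of_injective _ hg, Finset.card_univ, Fintype.card_fin]
  set S₀ : Idx := ⟨Finset.image g Finset.univ, hcard0⟩ with hS₀
  have hmem : ∀ i, g i ∈ S₀.1 := fun i => Finset.mem_image_of_mem g (Finset.mem_univ i)
  let g' : Fin 4 → {x // x ∈ S₀.1} := fun i => ⟨g i, hmem i⟩
  have hcard : Fintype.card {x // x ∈ S₀.1} = 4 := by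
    rw [Fintype.card_coe, S₀.2]
  have hg' : Function.Bijective g' := by
    rw [Fintype.bijective_iff_injective_and_card]
    exact ⟨fun a b h => hg (congrArg Subtype.val h), by rw [hcard, Fintype.card_fin]⟩
  let m' : Fin 4 → {x // x ∈ S₀.1} := fun i => ⟨m S₀ i, m_mem S₀ i⟩
  have hm' : Function.Bijective m' := by
    rw [Fintype.bijective_iff_injective_and_card]
    exact ⟨fun a b h => m_inj S₀ (congrArg Subtype.val h), by rw [hcard, Fintype.card_fin]⟩
  let E1 := Equiv.ofBijective g' hg'
  let E2 := Equiv.ofBijective m' hm'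
  let π : Equiv.Perm (Fin 4) := E1.trans E2.symm
  have hgm : g = fun i => m S₀ (π i) := by
    funext i
    have h1 : m' (E2.symm (E1 i)) = E1 i := E2.apply_symm_apply (E1 i)
    exact (congrArg Subtype.val h1).symm
  exact ⟨S₀, ((Equiv.Perm.sign π : ℤ) : F), by rw [hgm, Wg_perm]⟩

lemma ext_basis {N : Type*} [AddCommGroup N] [Module F N] {f h : (⋀[F]^4 V) →ₗ[F] N}
    (H : ∀ S : Idx, f (Wg e (m S)) = h (Wg e (m S))) : f = h := by
  apply LinearMap.ext_on (span_W e)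
  rintro _ ⟨g, rfl⟩
  by_cases hg : Function.Injective g
  · obtain ⟨S, c, hW⟩ := Wg_scale e hg
    rw [hW, map_smul, map_smul, H]
  · rw [Wg_zero e hg, map_zero, map_zero]

lemma detval (k : Fin 8 → Fin 8) : e.det (fun j => e (k j)) = ((GZ k : ℤ) : F) := by
  rw [Module.Basis.det_apply]
  have hM : e.toMatrix (fun j => e (k j)) =
      (Matrix.of fun i j => if k j = i then (1 : ℤ) else 0).map (Int.cast : ℤ → F) := by
    ext i j
    rw [Module.Basis.toMatrix_apply, Module.Basis.repr_self, Matrix.map_apply,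
      Matrix.of_apply, Finsupp.single_apply, apply_ite (Int.cast : ℤ → F)]
    simp
  rw [hM, detAux_map]
  rfl

lemma Ωval (Ω : (⋀[F]^4 V) →ₗ[F] (⋀[F]^4 V) →ₗ[F] F)
    (hΩ : ∀ v w : Fin 4 → V, Ω (wedge 4 v) (wedge 4 w) = e.det (Fin.append v w))
    (g h : Fin 4 → Fin 8) :
    Ω (Wg e g) (Wg e h) = ((GZ (Fin.append g h) : ℤ) : F) := by
  show Ω (wedge 4 fun i => e (g i)) (wedge 4 fun i => e (h i)) = _
  rw [hΩ]
  have hap : Fin.append (fun i => e (g i)) (fun i => e (h i)) =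
      fun j : Fin 8 => e (Fin.append g h j) := by
    funext j
    refine Fin.addCases (motive := fun j => Fin.append (fun i => e (g i)) (fun i => e (h i)) j
      = e (Fin.append g h j)) (fun i => ?_) (fun i => ?_) j
    · simp only [Fin.append_left]
    · simp only [Fin.append_right]
  rw [hap, detval]

lemma Bval (B : V →ₗ[F] V →ₗ[F] F) (hBalt : ∀ v : V, B v v = 0)
    (hxy : ∀ i j : Fin 4,
      B (e (Fin.castAdd 4 i)) (e (Fin.natAdd 4 j)) = if i = j then 1 else 0)
    (hxx : ∀ i j : Fin 4, B (e (Fin.castAdd 4 i)) (e (Fin.castAdd 4 j)) = 0)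
    (hyy : ∀ i j : Fin 4, B (e (Fin.natAdd 4 i)) (e (Fin.natAdd 4 j)) = 0) :
    ∀ a b : Fin 8, B (e a) (e b) = ((βZ a b : ℤ) : F) := by
  have skew : ∀ v w : V, B w v = - B v w := by
    intro v w
    have h0 := hBalt (v + w)
    simp only [map_add, LinearMap.add_apply, hBalt] at h0
    linear_combination h0
  have rep : ∀ a : Fin 8, (∃ i : Fin 4, a = Fin.castAdd 4 i) ∨ ∃ i : Fin 4, a = Fin.natAdd 4 i := by
    intro a
    by_cases hlt : (a : ℕ) < 4
    · exact Or.inl ⟨⟨(a : ℕ), hlt⟩, by ext; simp⟩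
    · have ha := a.isLt
      exact Or.inr ⟨⟨(a : ℕ) - 4, by omega⟩, by ext; simp [Fin.natAdd]; omega⟩
  intro a b
  rcases rep a with ⟨i, rfl⟩ | ⟨i, rfl⟩ <;> rcases rep b with ⟨j, rfl⟩ | ⟨j, rfl⟩
  · rw [hxx, βZ_cc, Int.cast_zero]
  · rw [hxy, βZ_cn]
    by_cases h : i = j <;> simp [h]
  · rw [skew, hxy, βZ_nc]
    by_cases h : i = j
    · subst h; simp
    · simp [h, Ne.symm h]
  · rw [hyy, βZ_nn, Int.cast_zero]

lemma Ωbval (B : V →ₗ[F] V →ₗ[F] F)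
    (hB : ∀ a b : Fin 8, B (e a) (e b) = ((βZ a b : ℤ) : F))
    (Ωb : (⋀[F]^4 V) →ₗ[F] (⋀[F]^4 V) →ₗ[F] F)
    (hΩb : ∀ v w : Fin 4 → V,
      Ωb (wedge 4 v) (wedge 4 w) = Matrix.det (Matrix.of fun i j => B (v i) (w j)))
    (S T : Idx) :
    Ωb (Wg e (m S)) (Wg e (m T)) = ((GbZ S T : ℤ) : F) := by
  show Ωb (wedge 4 fun i => e (m S i)) (wedge 4 fun i => e (m T i)) = _
  rw [hΩb]
  have hM : (Matrix.of fun i j => B (e (m S i)) (e (m T j))) =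
      (Matrix.of fun i j => βZ (m S i) (m T j)).map (Int.cast : ℤ → F) := by
    ext i j
    rw [Matrix.map_apply, Matrix.of_apply, Matrix.of_apply, hB]
  rw [hM, detAux_map]
  rfl

lemma repr_apply (Ω : (⋀[F]^4 V) →ₗ[F] (⋀[F]^4 V) →ₗ[F] F)
    (hΩ : ∀ v w : Fin 4 → V, Ω (wedge 4 v) (wedge 4 w) = e.det (Fin.append v w))
    (Z : ⋀[F]^4 V) :
    Z = ∑ S : Idx, (((η S : ℤ) : F) * Ω Z (Wg e (m (Sc S)))) • Wg e (m S) := by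
  have hRapp : ∀ W : ⋀[F]^4 V,
      (∑ S : Idx, (((η S : ℤ) : F) • (Ω.flip (Wg e (m (Sc S))))).smulRight (Wg e (m S))) W
      = ∑ S : Idx, (((η S : ℤ) : F) * Ω W (Wg e (m (Sc S)))) • Wg e (m S) := by
    intro W
    rw [LinearMap.sum_apply]
    refine Finset.sum_congr rfl fun S _ => ?_
    rw [LinearMap.smulRight_apply, LinearMap.smul_apply, LinearMap.flip_apply, smul_eq_mul]
  have hid : (∑ S : Idx, (((η S : ℤ) : F) • (Ω.flip (Wg e (m (Sc S))))).smulRight (Wg e (m S)))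
      = LinearMap.id := by
    apply ext_basis e
    intro S₀
    rw [hRapp, LinearMap.id_apply, Finset.sum_eq_single S₀]
    · rw [Ωval e Ω hΩ, show GZ (Fin.append (m S₀) (m (Sc S₀))) = η S₀ from rfl,
        ← Int.cast_mul, D2 S₀, Int.cast_one, one_smul]
    · intro S _ hS
      rw [Ωval e Ω hΩ, show GZ (Fin.append (m S₀) (m (Sc S))) = pairG S₀ (Sc S) from rfl,
        pairG_vanish (fun hc => hS (Sc_inj hc)), Int.cast_zero, mul_zero, zero_smul]
    · intro hnot
      exact absurd (Finset.mem_univ S₀) hnot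
  conv_lhs => rw [← LinearMap.id_apply (R := F) Z, ← hid]
  rw [hRapp]

lemma τw (Ω : (⋀[F]^4 V) →ₗ[F] (⋀[F]^4 V) →ₗ[F] F)
    (hΩ : ∀ v w : Fin 4 → V, Ω (wedge 4 v) (wedge 4 w) = e.det (Fin.append v w))
    (B : V →ₗ[F] V →ₗ[F] F)
    (hB : ∀ a b : Fin 8, B (e a) (e b) = ((βZ a b : ℤ) : F))
    (Ωb : (⋀[F]^4 V) →ₗ[F] (⋀[F]^4 V) →ₗ[F] F)
    (hΩb : ∀ v w : Fin 4 → V,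
      Ωb (wedge 4 v) (wedge 4 w) = Matrix.det (Matrix.of fun i j => B (v i) (w j)))
    (τ : (⋀[F]^4 V) →ₗ[F] (⋀[F]^4 V))
    (hτ : ∀ X Y : ⋀[F]^4 V, Ω (τ X) Y = Ωb X Y)
    (S : Idx) :
    τ (Wg e (m S)) = ((cZ S : ℤ) : F) • Wg e (m (fS S)) := by
  have h2 : ∀ T : Idx, Ω (τ (Wg e (m S))) (Wg e (m (Sc T))) = ((GbZ S (Sc T) : ℤ) : F) :=
    fun T => by rw [hτ, Ωbval e B hB Ωb hΩb]
  conv_lhs => rw [repr_apply e Ω hΩ (τ (Wg e (m S)))]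
  simp only [h2]
  rw [Finset.sum_eq_single (fS S)]
  · rw [← Int.cast_mul]
    rfl
  · intro T _ hT
    rw [GbZ_vanish (fun hc => hT (eq_fS_of_Sc_eq hc)), Int.cast_zero, mul_zero, zero_smul]
  · intro hnot
    exact absurd (Finset.mem_univ _) hnot

end Main

end Stmt14Aux


open Stmt14Aux

/-- The operator `τ` is an involution. -/
theorem stmt14 {F V : Type*} [Field F] [CharZero F] [AddCommGroup V] [Module F V]
    (e : Module.Basis (Fin 8) F V)
    (B : V →ₗ[F] V →ₗ[F] F) (hBalt : ∀ v : V, B v v = 0)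
    (hxy : ∀ i j : Fin 4,
      B (e (Fin.castAdd 4 i)) (e (Fin.natAdd 4 j)) = if i = j then 1 else 0)
    (hxx : ∀ i j : Fin 4, B (e (Fin.castAdd 4 i)) (e (Fin.castAdd 4 j)) = 0)
    (hyy : ∀ i j : Fin 4, B (e (Fin.natAdd 4 i)) (e (Fin.natAdd 4 j)) = 0)
    (Ω : (⋀[F]^4 V) →ₗ[F] (⋀[F]^4 V) →ₗ[F] F)
    (hΩ : ∀ v w : Fin 4 → V, Ω (wedge 4 v) (wedge 4 w) = e.det (Fin.append v w))
    (Ωb : (⋀[F]^4 V) →ₗ[F] (⋀[F]^4 V) →ₗ[F] F)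
    (hΩb : ∀ v w : Fin 4 → V,
      Ωb (wedge 4 v) (wedge 4 w) = Matrix.det (Matrix.of fun i j => B (v i) (w j)))
    (τ : (⋀[F]^4 V) →ₗ[F] (⋀[F]^4 V))
    (hτ : ∀ X Y : ⋀[F]^4 V, Ω (τ X) Y = Ωb X Y) :
    ∀ X : ⋀[F]^4 V, τ (τ X) = X := by
  intro X
  have hB : ∀ a b : Fin 8, B (e a) (e b) = ((βZ a b : ℤ) : F) :=
    Bval e B hBalt hxy hxx hyy
  have key : ∀ S : Idx, τ (τ (Wg e (m S))) = Wg e (m S) := by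
    intro S
    rw [τw e Ω hΩ B hB Ωb hΩb τ hτ S, map_smul, τw e Ω hΩ B hB Ωb hΩb τ hτ (fS S),
      smul_smul, D5 S, ← Int.cast_mul, D6 S, Int.cast_one, one_smul]
  have hcomp : τ ∘ₗ τ = LinearMap.id := by
    apply ext_basis e
    intro S
    rw [LinearMap.comp_apply, key S, LinearMap.id_apply]
  have := LinearMap.congr_fun hcomp X
  simpa using this
end

section
/- Let f be an invertible F-linear endomorphism of V with det(f) = 1. Then the following two conditions together hold — (a) f∘d∘f⁻¹ = d for every d ∈ End_F(V) with trace 0, and (b) ⋀⁴f = id on ⋀⁴V — if and only if f = c·id_V for some c ∈ F with c⁴ = 1. -/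
open ExteriorAlgebra

lemma wedge_smul {F : Type*} [Field F] {V : Type*} [AddCommGroup V] [Module F V]
    (n : ℕ) (c : F) (v : Fin n → V) :
    wedge n (fun i => c • v i) = c ^ n • (wedge n v : ⋀[F]^n V) := by
  apply Subtype.ext
  show ιMulti F n (fun i => c • v i) = c ^ n • ιMulti F n v
  have := MultilinearMap.map_smul_univ (ιMulti F n (M := V)).toMultilinearMap
    (fun _ : Fin n => c) v
  simpa using this

lemma wedge_span {F : Type*} [Field F] {V : Type*} [AddCommGroup V] [Module F V] (n : ℕ) :
    Submodule.span F (Set.range (wedge (F := F) (V := V) n)) = ⊤ := by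
  apply Submodule.map_injective_of_injective (Submodule.injective_subtype (⋀[F]^n V))
  rw [Submodule.map_span, Submodule.map_top, Submodule.range_subtype]
  have himg : (⋀[F]^n V).subtype '' (Set.range (wedge (F := F) (V := V) n))
      = Set.range (ιMulti F n (M := V)) := by
    ext x
    constructor
    · rintro ⟨y, ⟨v, rfl⟩, rfl⟩
      exact ⟨v, rfl⟩
    · rintro ⟨v, rfl⟩
      exact ⟨wedge n v, ⟨v, rfl⟩, rfl⟩
  rw [himg, ιMulti_span_fixedDegree]

/-- Let `f` be an invertible endomorphism of an 8-dimensional space `V` with `det(f) = 1`.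
Then `f` centralizes all trace-zero endomorphisms and `⋀⁴f = id` if and only if
`f = c·id_V` for some `c ∈ F` with `c⁴ = 1`. -/
theorem stmt19 {F V : Type*} [Field F] [CharZero F]
    (hroot : ∃ ζ : F, IsPrimitiveRoot ζ 4)
    [AddCommGroup V] [Module F V] [FiniteDimensional F V]
    (hdim : Module.finrank F V = 8)
    (f : (Module.End F V)ˣ) (hdet : LinearMap.det (f : Module.End F V) = 1)
    (F4f : (⋀[F]^4 V) →ₗ[F] (⋀[F]^4 V))
    (hF4f : ∀ v : Fin 4 → V,
      F4f (wedge 4 v) = wedge 4 fun i => (f : Module.End F V) (v i)) :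
    ((∀ d : Module.End F V, LinearMap.trace F V d = 0 →
        (f : Module.End F V) * d * (↑f⁻¹ : Module.End F V) = d) ∧
      F4f = LinearMap.id) ↔
    ∃ c : F, c ^ 4 = 1 ∧ (f : Module.End F V) = c • (1 : Module.End F V) := by
  classical
  let b : Module.Basis (Fin 8) F V := Module.finBasisOfFinrankEq F V hdim
  have h48 : (4 : ℕ) ≤ 8 := by norm_num
  -- the wedge of the first four basis vectors is nonzero
  set vb : Fin 4 → V := fun i => b (Fin.castLE h48 i) with hvb
  have hwne : wedge (F := F) 4 vb ≠ 0 := by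
    intro h0
    have h0' : ιMulti F 4 vb = 0 := congrArg Subtype.val h0
    -- build an alternating form detecting this wedge
    let φ : V →ₗ[F] (Fin 4 → F) := LinearMap.pi fun i => b.coord (Fin.castLE h48 i)
    let A : V [⋀^Fin 4]→ₗ[F] F := (Matrix.detRowAlternating).compLinearMap φ
    let g : ∀ i, V [⋀^Fin i]→ₗ[F] F := fun i =>
      if h : i = 4 then h ▸ A else 0
    have hg4 : g 4 = A := by simp [g]
    have := liftAlternating_apply_ιMulti (R := F) (M := V) (N := F) g vb
    rw [h0', map_zero] at this
    have hA : A vb = 1 := by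
      show Matrix.detRowAlternating (Matrix.of fun i => φ (vb i)) = 1
      have : (Matrix.of fun i => φ (vb i)) = (1 : Matrix (Fin 4) (Fin 4) F) := by
        ext i j
        simp only [Matrix.of_apply, φ, hvb, LinearMap.pi_apply, Module.Basis.coord_apply,
          Module.Basis.repr_self, Matrix.one_apply]
        rw [Finsupp.single_apply]
        simp [Fin.castLE_inj, eq_comm]
      rw [this]
      exact Matrix.det_one
    rw [hg4, hA] at this
    exact one_ne_zero this.symm
  constructor
  · rintro ⟨hcomm, hF4⟩
    -- f commutes with every trace-zero endomorphism
    have hcomm' : ∀ d : Module.End F V, LinearMap.trace F V d = 0 →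
        (f : Module.End F V) * d = d * (f : Module.End F V) := by
      intro d hd
      have h1 := congrArg (· * (f : Module.End F V)) (hcomm d hd)
      simpa [mul_assoc, Units.inv_mul] using h1
    -- pass to matrices
    have hM : LinearMap.toMatrix b b (f : Module.End F V)
        ∈ Set.range (Matrix.scalar (Fin 8)) := by
      apply Matrix.mem_range_scalar_of_commute_single
      intro i j hij
      set d : Module.End F V := Matrix.toLin b b (Matrix.single i j 1) with hd
      have htr : LinearMap.trace F V d = 0 := by
        rw [LinearMap.trace_eq_matrix_trace F b, hd, LinearMap.toMatrix_toLin]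
        exact Matrix.trace_single_eq_of_ne i j 1 hij
      have hco := hcomm' d htr
      have : Matrix.single i j 1 = LinearMap.toMatrix b b d := by
        rw [hd, LinearMap.toMatrix_toLin]
      rw [this]
      unfold Commute SemiconjBy
      rw [← LinearMap.toMatrix_mul, ← LinearMap.toMatrix_mul, hco]
    obtain ⟨c, hc⟩ := hM
    have hf : (f : Module.End F V) = c • (1 : Module.End F V) := by
      apply (LinearMap.toMatrix b b).injective
      rw [← hc, map_smul, LinearMap.toMatrix_one]
      ext i j
      simp [Matrix.scalar_apply, Matrix.one_apply, Matrix.diagonal_apply, Matrix.smul_apply]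
    refine ⟨c, ?_, hf⟩
    -- use the exterior power condition to get c ^ 4 = 1
    have h1 := hF4f vb
    rw [hF4] at h1
    have h2 : (wedge 4 fun i => (f : Module.End F V) (vb i)) = c ^ 4 • (wedge 4 vb : ⋀[F]^4 V) := by
      rw [show (fun i => (f : Module.End F V) (vb i)) = fun i => c • vb i by
        funext i; rw [hf]; simp]
      exact wedge_smul 4 c vb
    rw [h2] at h1
    simp only [LinearMap.id_apply] at h1
    by_contra hc4
    have h1' := congrArg Subtype.val h1
    rw [Submodule.coe_smul] at h1'
    have h1'' : (ιMulti F 4 vb : ExteriorAlgebra F V) = c ^ 4 • ιMulti F 4 vb := h1'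
    have : (c ^ 4 - 1) • (ιMulti F 4 vb : ExteriorAlgebra F V) = 0 := by
      rw [sub_smul, one_smul, ← h1'', sub_self]
    rcases smul_eq_zero.mp this with h | h
    · exact hc4 (by linear_combination h)
    · exact hwne (Subtype.ext h)
  · rintro ⟨c, hc4, hf⟩
    constructor
    · intro d _
      have hcom : (f : Module.End F V) * d = d * (f : Module.End F V) := by
        rw [hf, smul_mul_assoc, one_mul, mul_smul_comm, mul_one]
      rw [hcom, mul_assoc, Units.mul_inv, mul_one]
    · -- F4f = id
      apply LinearMap.ext
      intro x
      have hx : x ∈ Submodule.span F (Set.range (wedge (F := F) (V := V) 4)) := by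
        rw [wedge_span]; trivial
      induction hx using Submodule.span_induction with
      | mem y hy =>
        obtain ⟨v, rfl⟩ := hy
        rw [hF4f v, LinearMap.id_apply,
          show (fun i => (f : Module.End F V) (v i)) = fun i => c • v i by
            funext i; rw [hf]; simp,
          wedge_smul, hc4, one_smul]
      | zero => simp
      | add y z _ _ hy hz => simp [map_add, hy, hz]
      | smul a y _ hy => simp [map_smul, hy]
end
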